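/- Let g, κ be a compatible pair of non-decreasing, right-continuous, unbounded functions on [0,∞) with g(0)=κ(0)=0 and strictly positive on (0,∞). Then the smooth composition γ = g ∘̃ κ is a continuous function that is non-decreasing, satisfies γ(0)=0, γ(t)>0 for t>0, and is unbounded. -/

import Mathlib

open Set Function Filter

/-- Right-continuous generalized inverse: `h⁻¹(s) = inf {u > 0 : h(u) > s}`. -/
noncomputable def ginv (h : ℝ → ℝ) (s : ℝ) : ℝ := sInf {u : ℝ | 0 < u ∧ s < h u}

/-- Left limit of a function monotone on `[0,∞)`, with the convention `h(0−) = h(0)`. -/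
noncomputable def llim (h : ℝ → ℝ) (u : ℝ) : ℝ :=
  if u ≤ 0 then h 0 else sSup (h '' Set.Ico 0 u)

/-- Right-continuity on `[0,∞)`. -/
def RightCts (h : ℝ → ℝ) : Prop := ∀ x : ℝ, 0 ≤ x → ContinuousWithinAt h (Set.Ici x) x

/-- The class `D₀↑↑(ℝ₊)`: non-decreasing, right-continuous, `h 0 = 0`, strictly
positive on `(0,∞)`, and unbounded. -/
def Dpp (h : ℝ → ℝ) : Prop :=
  MonotoneOn h (Set.Ici 0) ∧ RightCts h ∧ h 0 = 0 ∧ (∀ t : ℝ, 0 < t → 0 < h t) ∧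
    (∀ M : ℝ, ∃ t : ℝ, 0 ≤ t ∧ M < h t)

/-- `h` jumps at `u`: `h(u−) < h(u)`. -/
noncomputable def JumpAt (h : ℝ → ℝ) (u : ℝ) : Prop := llim h u < h u

/-- Compatibility condition (H1): whenever `g` jumps at `u`, the level set
`{r ≥ 0 : κ r = u}` has positive length. -/
def H1 (g κ : ℝ → ℝ) : Prop :=
  ∀ u : ℝ, JumpAt g u → ∃ r₁ r₂ : ℝ, 0 ≤ r₁ ∧ r₁ < r₂ ∧ κ r₁ = u ∧ κ r₂ = u

/-- Compatibility condition (H2): whenever `κ(s−) < κ(s)`, `g(κ(s−)) = g(κ(s)−)`. -/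
def H2 (g κ : ℝ → ℝ) : Prop :=
  ∀ s : ℝ, 0 ≤ s → llim κ s < κ s → g (llim κ s) = llim g (κ s)

-- Smooth composition `g ∘̃ κ`: equal to `g ∘ κ` outside the intervals
-- `[κ⁻¹(u−), κ⁻¹(u)]` over jump points `u` of `g`, and on each such interval the linear
-- interpolation between `(κ⁻¹(u−), g(u−))` and `(κ⁻¹(u), g(u))`.
open scoped Classical in
noncomputable def stilde (g κ : ℝ → ℝ) (s : ℝ) : ℝ :=
  if h : ∃ u : ℝ, JumpAt g u ∧ s ∈ Set.Icc (llim (ginv κ) u) (ginv κ u) then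
    let u := Classical.choose h
    llim g u + (g u - llim g u) * (s - llim (ginv κ) u) / (ginv κ u - llim (ginv κ) u)
  else g (κ s)

section Aux

open Topology

variable {g κ h : ℝ → ℝ} {s s' r u v c : ℝ}

lemma setNe (hκ : Dpp κ) (s : ℝ) : {u : ℝ | 0 < u ∧ s < κ u}.Nonempty := by
  obtain ⟨t, ht0, hts⟩ := hκ.2.2.2.2 s
  refine ⟨max t 1, lt_of_lt_of_le one_pos (le_max_right t 1), lt_of_lt_of_le hts ?_⟩
  exact hκ.1 ht0 (le_trans ht0 (le_max_left t 1)) (le_max_left t 1)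

lemma setBdd : BddBelow {u : ℝ | 0 < u ∧ s < κ u} := ⟨0, fun t ht => ht.1.le⟩

lemma ginv_nonneg (hκ : Dpp κ) : 0 ≤ ginv κ s :=
  le_csInf (setNe hκ s) fun t ht => ht.1.le

lemma ginv_mono (hκ : Dpp κ) : Monotone (ginv κ) := fun s s' hss =>
  csInf_le_csInf setBdd (setNe hκ s') fun t ht => ⟨ht.1, lt_of_le_of_lt hss ht.2⟩

lemma ginv_le (hr : 0 < r) (hlt : s < κ r) : ginv κ s ≤ r := csInf_le setBdd ⟨hr, hlt⟩

lemma lt_κ_of_ginv_lt (hκ : Dpp κ) (hr : 0 ≤ r) (hlt : ginv κ s < r) : s < κ r := by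
  obtain ⟨t, ⟨ht0, hts⟩, htr⟩ := exists_lt_of_csInf_lt (setNe hκ s) hlt
  exact lt_of_lt_of_le hts (hκ.1 ht0.le hr htr.le)

lemma rc_ge (hrc : RightCts h) (hu : 0 ≤ u) (hb : ∀ r, u < r → c ≤ h r) : c ≤ h u := by
  have h1 : Tendsto h (𝓝[>] u) (𝓝 (h u)) := (hrc u hu).mono Ioi_subset_Ici_self
  exact ge_of_tendsto h1 (eventually_nhdsWithin_of_forall fun r hr => hb r hr)

lemma le_κ_ginv (hκ : Dpp κ) (hs : 0 ≤ s) : s ≤ κ (ginv κ s) :=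
  rc_ge hκ.2.1 (ginv_nonneg hκ)
    (fun r hr => (lt_κ_of_ginv_lt hκ (le_trans (ginv_nonneg hκ) hr.le) hr).le)

lemma le_ginv (hκ : Dpp κ) (hr : 0 ≤ r) (hle : κ r ≤ s) : r ≤ ginv κ s := by
  refine le_csInf (setNe hκ s) fun t ht => ?_
  by_contra hc; push_neg at hc
  have := hκ.1 ht.1.le hr hc.le
  linarith [ht.2]

lemma llim_le_self (hm : MonotoneOn h (Ici 0)) (hu : 0 ≤ u) : llim h u ≤ h u := by
  rcases eq_or_lt_of_le hu with he | hlt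
  · simp [llim, ← he]
  · rw [llim, if_neg (not_le.2 hlt)]
    refine csSup_le ⟨h 0, 0, ⟨le_rfl, hlt⟩, rfl⟩ ?_
    rintro x ⟨t, ⟨ht0, htu⟩, rfl⟩
    exact hm ht0 hu htu.le

lemma le_llim (hm : MonotoneOn h (Ici 0)) (hv : 0 ≤ v) (hvu : v < u) : h v ≤ llim h u := by
  have hu : 0 < u := lt_of_le_of_lt hv hvu
  rw [llim, if_neg (not_le.2 hu)]
  refine le_csSup ⟨h u, ?_⟩ ⟨v, ⟨hv, hvu⟩, rfl⟩
  rintro x ⟨t, ⟨ht0, htu⟩, rfl⟩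
  exact hm ht0 hu.le htu.le

lemma llim_le_of (hu : 0 < u) (hb : ∀ t, 0 ≤ t → t < u → h t ≤ c) : llim h u ≤ c := by
  rw [llim, if_neg (not_le.2 hu)]
  refine csSup_le ⟨h 0, 0, ⟨le_rfl, hu⟩, rfl⟩ ?_
  rintro x ⟨t, ⟨ht0, htu⟩, rfl⟩
  exact hb t ht0 htu

lemma ginv_pos (hκ : Dpp κ) (hv : 0 < v) : 0 < ginv κ v := by
  have hc : Tendsto κ (𝓝[Set.Ici 0] 0) (𝓝 0) := by
    have := hκ.2.1 0 le_rfl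
    rwa [ContinuousWithinAt, hκ.2.2.1] at this
  have hmem : κ ⁻¹' Iio v ∈ 𝓝[Set.Ici 0] (0:ℝ) := hc (Iio_mem_nhds hv)
  rw [Metric.mem_nhdsWithin_iff] at hmem
  obtain ⟨ε, hε, hsub⟩ := hmem
  refine lt_of_lt_of_le hε (le_csInf (setNe hκ v) ?_)
  rintro t ⟨ht0, htv⟩
  by_contra hc'; push_neg at hc'
  have hmem2 : t ∈ Metric.ball (0:ℝ) ε ∩ Set.Ici 0 :=
    ⟨by simpa [Real.dist_eq, abs_of_nonneg ht0.le] using hc', ht0.le⟩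
  exact absurd (hsub hmem2) (not_lt.2 htv.le)

lemma A_pos (hκ : Dpp κ) (hu : 0 < u) : 0 < llim (ginv κ) u :=
  lt_of_lt_of_le (ginv_pos hκ (half_pos hu))
    (le_llim ((ginv_mono hκ).monotoneOn _) (half_pos hu).le (half_lt_self hu))

lemma A_nonneg (hκ : Dpp κ) : 0 ≤ llim (ginv κ) u := by
  by_cases hu : u ≤ 0
  · rw [llim, if_pos hu]; exact ginv_nonneg hκ
  · exact le_trans (ginv_nonneg hκ)
      (le_llim ((ginv_mono hκ).monotoneOn _) le_rfl (not_le.1 hu))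

lemma jump_pos (hκ : Dpp κ) (h1 : H1 g κ) (hu : JumpAt g u) : 0 < u := by
  obtain ⟨r₁, r₂, hr₁, hr₁₂, hκ₁, hκ₂⟩ := h1 u hu
  have hu0 : 0 ≤ u := by
    have h := hκ.1 (le_refl (0:ℝ)) hr₁ hr₁
    rw [hκ.2.2.1, hκ₁] at h; exact h
  rcases eq_or_lt_of_le hu0 with he | hlt
  · exfalso
    have hj : llim g u < g u := hu
    rw [← he] at hj
    rw [llim, if_pos le_rfl] at hj
    exact lt_irrefl _ hj
  · exact hlt

lemma A_lt_B (hκ : Dpp κ) (h1 : H1 g κ) (hu : JumpAt g u) :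
    llim (ginv κ) u < ginv κ u := by
  obtain ⟨r₁, r₂, hr₁, hr₁₂, hκ₁, hκ₂⟩ := h1 u hu
  have hupos := jump_pos hκ h1 hu
  have hr₁pos : 0 < r₁ := by
    rcases eq_or_lt_of_le hr₁ with he | hlt
    · exfalso; rw [← he] at hκ₁; rw [hκ.2.2.1] at hκ₁; linarith
    · exact hlt
  have hA : llim (ginv κ) u ≤ r₁ :=
    llim_le_of hupos fun w hw0 hwu => ginv_le hr₁pos (by rw [hκ₁]; exact hwu)
  have hB : r₂ ≤ ginv κ u := le_ginv hκ (by linarith) hκ₂.le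
  linarith

lemma κ_le_of_lt_ginv (hκ : Dpp κ) (hs : 0 ≤ s) (hu : 0 ≤ u) (hlt : s < ginv κ u) :
    κ s ≤ u := by
  by_contra hc; push_neg at hc
  rcases eq_or_lt_of_le hs with he | hs0
  · rw [← he, hκ.2.2.1] at hc; linarith
  · exact absurd (ginv_le hs0 hc) (not_le.2 hlt)

lemma le_κ_of_A_lt (hκ : Dpp κ) (hu : 0 < u) (hlt : llim (ginv κ) u < s) : u ≤ κ s := by
  have hs0 : 0 ≤ s := le_trans (A_nonneg hκ) hlt.le
  refine le_of_forall_lt fun w hw => ?_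
  rcases lt_or_ge w 0 with hw0 | hw0
  · refine lt_of_lt_of_le hw0 ?_
    have := hκ.1 (le_refl (0:ℝ)) hs0 hs0
    rwa [hκ.2.2.1] at this
  · have hle : ginv κ w ≤ llim (ginv κ) u := le_llim ((ginv_mono hκ).monotoneOn _) hw0 hw
    exact lt_κ_of_ginv_lt hκ hs0 (lt_of_le_of_lt hle hlt)

lemma κ_lt_of_lt_A (hκ : Dpp κ) (hu : 0 < u) (hs : 0 ≤ s) (hlt : s < llim (ginv κ) u) :
    κ s < u := by
  rw [llim, if_neg (not_le.2 hu)] at hlt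
  obtain ⟨x, ⟨w, ⟨hw0, hwu⟩, rfl⟩, hsx⟩ :=
    exists_lt_of_lt_csSup (⟨ginv κ 0, ⟨0, ⟨le_rfl, hu⟩, rfl⟩⟩ : ((ginv κ) '' Ico 0 u).Nonempty) hlt
  exact lt_of_le_of_lt (κ_le_of_lt_ginv hκ hs hw0 hsx) hwu

lemma B_le_A (hκ : Dpp κ) {a b : ℝ} (ha : 0 < a) (hab : a < b) :
    ginv κ a ≤ llim (ginv κ) b :=
  le_trans (ginv_mono hκ (by linarith : a ≤ (a + b) / 2))
    (le_llim ((ginv_mono hκ).monotoneOn _) (by linarith) (by linarith))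

lemma key_jump (hκ : Dpp κ) (h2 : H2 g κ) {s₀ a : ℝ} (hs₀ : 0 < s₀)
    (hub : ∀ t, 0 ≤ t → t < s₀ → κ t ≤ a) (ha : 0 ≤ a) (hlt : a < κ s₀) :
    g (llim κ s₀) = llim g (κ s₀) ∧ 0 ≤ llim κ s₀ ∧ llim κ s₀ ≤ a := by
  have hle : llim κ s₀ ≤ a := llim_le_of hs₀ hub
  have hge : 0 ≤ llim κ s₀ := by
    have := le_llim hκ.1 le_rfl hs₀
    rwa [hκ.2.2.1] at this
  exact ⟨h2 s₀ hs₀.le (lt_of_le_of_lt hle hlt), hge, hle⟩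

end Aux

noncomputable def lint (g κ : ℝ → ℝ) (u s : ℝ) : ℝ :=
  llim g u + (g u - llim g u) * (s - llim (ginv κ) u) / (ginv κ u - llim (ginv κ) u)

section Aux2

variable {g κ : ℝ → ℝ} {s s' r u v : ℝ}

lemma stilde_of_neg (hP : ¬ ∃ u, JumpAt g u ∧ s ∈ Set.Icc (llim (ginv κ) u) (ginv κ u)) :
    stilde g κ s = g (κ s) := by
  rw [stilde, dif_neg hP]

lemma stilde_of_pos (hP : ∃ u, JumpAt g u ∧ s ∈ Set.Icc (llim (ginv κ) u) (ginv κ u)) :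
    stilde g κ s = lint g κ (Classical.choose hP) s := by
  rw [stilde, dif_pos hP]; rfl

lemma lint_A : lint g κ u (llim (ginv κ) u) = llim g u := by
  simp [lint]

lemma lint_B (hAB : llim (ginv κ) u < ginv κ u) : lint g κ u (ginv κ u) = g u := by
  rw [lint, mul_div_assoc, div_self (ne_of_gt (sub_pos.2 hAB)), mul_one]; ring

lemma lint_mono (hAB : llim (ginv κ) u < ginv κ u) (hle : llim g u ≤ g u) (hss : s ≤ s') :
    lint g κ u s ≤ lint g κ u s' := by
  rw [lint, lint]
  have h1 : (0:ℝ) < ginv κ u - llim (ginv κ) u := sub_pos.2 hAB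
  have h2 : (0:ℝ) ≤ g u - llim g u := sub_nonneg.2 hle
  have h3 : (g u - llim g u) * (s - llim (ginv κ) u) ≤
      (g u - llim g u) * (s' - llim (ginv κ) u) :=
    mul_le_mul_of_nonneg_left (by linarith) h2
  exact add_le_add (le_refl _) ((div_le_div_iff_of_pos_right h1).2 h3)

lemma lint_mem (hAB : llim (ginv κ) u < ginv κ u) (hle : llim g u ≤ g u)
    (hs : s ∈ Set.Icc (llim (ginv κ) u) (ginv κ u)) :
    lint g κ u s ∈ Set.Icc (llim g u) (g u) := by
  constructor
  · have := lint_mono (s := llim (ginv κ) u) (s' := s) hAB hle hs.1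
    rwa [lint_A] at this
  · have := lint_mono (s := s) (s' := ginv κ u) hAB hle hs.2
    rwa [lint_B hAB] at this

lemma stilde_mono (hg : Dpp g) (hκ : Dpp κ) (h1 : H1 g κ) (h2 : H2 g κ) :
    MonotoneOn (stilde g κ) (Set.Ici 0) := by
  rintro s hs s' hs' hss
  simp only [Set.mem_Ici] at hs hs'
  by_cases hP : ∃ u, JumpAt g u ∧ s ∈ Set.Icc (llim (ginv κ) u) (ginv κ u)
  · obtain ⟨hj, hmem⟩ := Classical.choose_spec hP
    set u := Classical.choose hP with hudef
    have hj' : llim g u < g u := hj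
    have hupos : 0 < u := jump_pos hκ h1 hj
    have hAB := A_lt_B hκ h1 hj
    by_cases hP' : ∃ u, JumpAt g u ∧ s' ∈ Set.Icc (llim (ginv κ) u) (ginv κ u)
    · obtain ⟨hj2, hmem'⟩ := Classical.choose_spec hP'
      set u' := Classical.choose hP' with hudef'
      have hj2' : llim g u' < g u' := hj2
      have hupos' : 0 < u' := jump_pos hκ h1 hj2
      have hAB' := A_lt_B hκ h1 hj2
      rcases lt_trichotomy u u' with hlt | heq | hgt
      · rw [stilde_of_pos hP, stilde_of_pos hP']
        calc lint g κ u s ≤ g u := (lint_mem hAB hj'.le hmem).2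
          _ ≤ llim g u' := le_llim hg.1 hupos.le hlt
          _ ≤ lint g κ u' s' := (lint_mem hAB' hj2'.le hmem').1
      · rw [stilde_of_pos hP, stilde_of_pos hP', ← hudef, ← hudef', ← heq]
        exact lint_mono hAB hj'.le hss
      · have hse : s = s' := by
          have c1 : s' ≤ ginv κ u' := hmem'.2
          have c2 : ginv κ u' ≤ llim (ginv κ) u := B_le_A hκ hupos' hgt
          have c3 : llim (ginv κ) u ≤ s := hmem.1
          linarith
        rw [hse]
    · have hBlt : ginv κ u < s' := by
        by_contra hc; push_neg at hc
        exact hP' ⟨u, hj, ⟨le_trans hmem.1 hss, hc⟩⟩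
      rw [stilde_of_pos hP, stilde_of_neg hP']
      have hκs' : u ≤ κ s' := (lt_κ_of_ginv_lt hκ hs' hBlt).le
      calc lint g κ u s ≤ g u := (lint_mem hAB hj'.le hmem).2
        _ ≤ g (κ s') := hg.1 hupos.le (le_trans hupos.le hκs') hκs'
  · by_cases hP' : ∃ u, JumpAt g u ∧ s' ∈ Set.Icc (llim (ginv κ) u) (ginv κ u)
    · obtain ⟨hj2, hmem'⟩ := Classical.choose_spec hP'
      set u' := Classical.choose hP' with hudef'
      have hj2' : llim g u' < g u' := hj2
      have hupos' : 0 < u' := jump_pos hκ h1 hj2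
      have hAB' := A_lt_B hκ h1 hj2
      have hAlt : s < llim (ginv κ) u' := by
        by_contra hc; push_neg at hc
        exact hP ⟨u', hj2, ⟨hc, le_trans hss hmem'.2⟩⟩
      have hκs : κ s < u' := κ_lt_of_lt_A hκ hupos' hs hAlt
      have hκs0 : 0 ≤ κ s := by
        have := hκ.1 (le_refl (0:ℝ)) hs hs
        rwa [hκ.2.2.1] at this
      rw [stilde_of_neg hP, stilde_of_pos hP']
      calc g (κ s) ≤ llim g u' := le_llim hg.1 hκs0 hκs
        _ ≤ lint g κ u' s' := (lint_mem hAB' hj2'.le hmem').1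
    · rw [stilde_of_neg hP, stilde_of_neg hP']
      have hκs0 : 0 ≤ κ s := by
        have := hκ.1 (le_refl (0:ℝ)) hs hs
        rwa [hκ.2.2.1] at this
      exact hg.1 hκs0 (le_trans hκs0 (hκ.1 hs hs' hss)) (hκ.1 hs hs' hss)

lemma stilde_zero (hg : Dpp g) (hκ : Dpp κ) (h1 : H1 g κ) : stilde g κ 0 = 0 := by
  have hP : ¬ ∃ u, JumpAt g u ∧ (0:ℝ) ∈ Set.Icc (llim (ginv κ) u) (ginv κ u) := by
    rintro ⟨u, hj, hmem⟩
    exact absurd hmem.1 (not_le.2 (A_pos hκ (jump_pos hκ h1 hj)))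
  rw [stilde_of_neg hP, hκ.2.2.1, hg.2.2.1]

lemma stilde_pos' (hg : Dpp g) (hκ : Dpp κ) (h1 : H1 g κ) {t : ℝ} (ht : 0 < t) :
    0 < stilde g κ t := by
  by_cases hP : ∃ u, JumpAt g u ∧ t ∈ Set.Icc (llim (ginv κ) u) (ginv κ u)
  · obtain ⟨hj, hmem⟩ := Classical.choose_spec hP
    set u := Classical.choose hP with hudef
    have hj' : llim g u < g u := hj
    have hupos : 0 < u := jump_pos hκ h1 hj
    have hAB := A_lt_B hκ h1 hj
    have hb := (lint_mem hAB hj'.le hmem).1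
    have hpos : 0 < llim g u :=
      lt_of_lt_of_le (hg.2.2.2.1 (u/2) (half_pos hupos))
        (le_llim hg.1 (half_pos hupos).le (half_lt_self hupos))
    rw [stilde_of_pos hP]; linarith
  · rw [stilde_of_neg hP]
    exact hg.2.2.2.1 _ (hκ.2.2.2.1 t ht)

lemma stilde_unbdd (hg : Dpp g) (hκ : Dpp κ) (h1 : H1 g κ) (h2 : H2 g κ) :
    ∀ M, ∃ t, 0 ≤ t ∧ M < stilde g κ t := by
  intro M
  obtain ⟨w, hw0, hwM⟩ := hg.2.2.2.2 M
  obtain ⟨r, hr0, hrw⟩ := hκ.2.2.2.2 w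
  refine ⟨r, hr0, ?_⟩
  by_cases hP : ∃ u, JumpAt g u ∧ r ∈ Set.Icc (llim (ginv κ) u) (ginv κ u)
  · obtain ⟨hj, hmem⟩ := Classical.choose_spec hP
    set u := Classical.choose hP with hudef
    have hj' : llim g u < g u := hj
    have hupos : 0 < u := jump_pos hκ h1 hj
    have hAB := A_lt_B hκ h1 hj
    rcases eq_or_lt_of_le hmem.2 with hrB | hrB
    · have hBg : lint g κ u r = g u := by
        have h7 := lint_B (g := g) (κ := κ) (u := u) hAB
        rw [← hrB] at h7; exact h7
      rw [stilde_of_pos hP, ← hudef, hBg]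
      rcases eq_or_lt_of_le (le_κ_ginv hκ hupos.le : u ≤ κ (ginv κ u)) with he | hlt
      · have hwu : w < u := by
          rw [he]; rw [hrB] at hrw; exact hrw
        exact lt_of_lt_of_le hwM (hg.1 hw0 hupos.le hwu.le)
      · have hspos : 0 < ginv κ u := ginv_pos hκ hupos
        have hub : ∀ t, 0 ≤ t → t < ginv κ u → κ t ≤ u :=
          fun t ht0 hts => κ_le_of_lt_ginv hκ ht0 hupos.le hts
        have hkey := key_jump hκ h2 hspos hub hupos.le hlt
        have h5 : g w ≤ llim g (κ (ginv κ u)) := by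
          rw [hrB] at hrw; exact le_llim hg.1 hw0 hrw
        have h6 : llim g (κ (ginv κ u)) ≤ g u := by
          rw [← hkey.1]; exact hg.1 hkey.2.1 hupos.le hkey.2.2
        linarith
    · have hκr : κ r ≤ u := κ_le_of_lt_ginv hκ hr0 hupos.le hrB
      have hwu : w < u := lt_of_lt_of_le hrw hκr
      have h5 : g w ≤ llim g u := le_llim hg.1 hw0 hwu
      have h6 := (lint_mem hAB hj'.le hmem).1
      rw [stilde_of_pos hP]; linarith
  · rw [stilde_of_neg hP]
    exact lt_of_lt_of_le hwM (hg.1 hw0 (le_trans hw0 hrw.le) hrw.le)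

end Aux2

section Aux3

variable {g κ : ℝ → ℝ}

lemma stilde_surj (hg : Dpp g) (hκ : Dpp κ) (h1 : H1 g κ) (h2 : H2 g κ) :
    ∀ y, 0 ≤ y → ∃ s, 0 ≤ s ∧ stilde g κ s = y := by
  intro y hy0
  rcases eq_or_lt_of_le hy0 with h0 | hy
  · exact ⟨0, le_rfl, by rw [stilde_zero hg hκ h1]; exact h0⟩
  set T := {v : ℝ | 0 ≤ v ∧ y ≤ g v} with hT
  have hTne : T.Nonempty := by
    obtain ⟨t, ht0, hty⟩ := hg.2.2.2.2 y
    exact ⟨t, ht0, hty.le⟩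
  have hTbdd : BddBelow T := ⟨0, fun t ht => ht.1⟩
  set u := sInf T with hudefn
  have hu0 : 0 ≤ u := le_csInf hTne fun t ht => ht.1
  have hgu : y ≤ g u := by
    refine rc_ge hg.2.1 hu0 fun r hr => ?_
    obtain ⟨t, ht, htr⟩ := exists_lt_of_csInf_lt hTne hr
    exact le_trans ht.2 (hg.1 ht.1 (le_trans ht.1 htr.le) htr.le)
  have hupos : 0 < u := by
    rcases eq_or_lt_of_le hu0 with h | h
    · exfalso; rw [← h, hg.2.2.1] at hgu; linarith
    · exact h
  have hlly : llim g u ≤ y := by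
    refine llim_le_of hupos fun t ht0 htu => ?_
    by_contra hc; push_neg at hc
    exact absurd (csInf_le hTbdd ⟨ht0, hc.le⟩) (not_le.2 htu)
  by_cases hjump : JumpAt g u
  · -- g jumps at u
    have hj' : llim g u < g u := hjump
    have hAB := A_lt_B hκ h1 hjump
    have hne : g u - llim g u ≠ 0 := ne_of_gt (sub_pos.2 hj')
    have hDne : ginv κ u - llim (ginv κ) u ≠ 0 := ne_of_gt (sub_pos.2 hAB)
    obtain ⟨s, hsdef⟩ : ∃ s : ℝ, s = llim (ginv κ) u +
        (y - llim g u) / (g u - llim g u) * (ginv κ u - llim (ginv κ) u) := ⟨_, rfl⟩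
    have hρ0 : 0 ≤ (y - llim g u) / (g u - llim g u) :=
      div_nonneg (by linarith) (by linarith)
    have hρ1 : (y - llim g u) / (g u - llim g u) ≤ 1 :=
      (div_le_one (sub_pos.2 hj')).2 (by linarith)
    have hsmem : s ∈ Set.Icc (llim (ginv κ) u) (ginv κ u) := by
      constructor
      · rw [hsdef]; nlinarith
      · rw [hsdef]; nlinarith
    have hP : ∃ w, JumpAt g w ∧ s ∈ Set.Icc (llim (ginv κ) w) (ginv κ w) := ⟨u, hjump, hsmem⟩
    obtain ⟨hjw, hmem⟩ := Classical.choose_spec hP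
    set w := Classical.choose hP with hwdef
    have hjw' : llim g w < g w := hjw
    have hwpos : 0 < w := jump_pos hκ h1 hjw
    have hABw := A_lt_B hκ h1 hjw
    have hs0 : 0 ≤ s := le_trans (A_nonneg hκ) hsmem.1
    refine ⟨s, hs0, ?_⟩
    rcases lt_trichotomy w u with hwu | hwu | hwu
    · -- w < u
      have hBA : ginv κ w ≤ llim (ginv κ) u := B_le_A hκ hwpos hwu
      have hsB : s = ginv κ w := le_antisymm hmem.2 (le_trans hBA hsmem.1)
      have hsA : s = llim (ginv κ) u := le_antisymm (by rw [hsB]; exact hBA) hsmem.1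
      have hyll : y = llim g u := by
        have h8 : (y - llim g u) / (g u - llim g u) * (ginv κ u - llim (ginv κ) u) = 0 := by
          rw [hsdef] at hsA; linarith
        rcases mul_eq_zero.1 h8 with h9 | h9
        · have h10 := (div_eq_zero_iff.1 h9).resolve_right hne
          linarith
        · exact absurd h9 hDne
      have hlintB : lint g κ w s = g w := by
        have h7 := lint_B (g := g) (κ := κ) (u := w) hABw
        rw [← hsB] at h7; exact h7
      rw [stilde_of_pos hP, ← hwdef, hlintB]
      have hle : g w ≤ y := by rw [hyll]; exact le_llim hg.1 hwpos.le hwu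
      have hspos : 0 < s := by rw [hsA]; exact A_pos hκ hupos
      have hub' : ∀ t, 0 ≤ t → t < s → κ t ≤ w := fun t ht0 hts =>
        κ_le_of_lt_ginv hκ ht0 hwpos.le (by rwa [← hsB])
      have hκsu : u ≤ κ s := by
        refine rc_ge hκ.2.1 hs0 fun r hr => le_κ_of_A_lt hκ hupos ?_
        rw [← hsA]; exact hr
      have hkey := key_jump hκ h2 hspos hub' hwpos.le (lt_of_lt_of_le hwu hκsu)
      have h5 : llim g u ≤ llim g (κ s) :=
        llim_le_of hupos fun t ht0 htu => le_llim hg.1 ht0 (lt_of_lt_of_le htu hκsu)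
      have h6 : llim g (κ s) ≤ g w := by
        rw [← hkey.1]; exact hg.1 hkey.2.1 hwpos.le hkey.2.2
      linarith
    · -- w = u
      rw [stilde_of_pos hP, ← hwdef, hwu, lint, hsdef]
      field_simp
      ring
    · -- u < w
      have hBA : ginv κ u ≤ llim (ginv κ) w := B_le_A hκ hupos hwu
      have hsA : s = llim (ginv κ) w := le_antisymm (le_trans hsmem.2 hBA) hmem.1
      have hsB : s = ginv κ u := le_antisymm hsmem.2 (le_trans hBA hmem.1)
      have hyg : y = g u := by
        have h8 : (y - llim g u) / (g u - llim g u) * (ginv κ u - llim (ginv κ) u) =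
            ginv κ u - llim (ginv κ) u := by
          rw [hsdef] at hsB; linarith
        have h10 : ((y - llim g u) / (g u - llim g u) - 1) * (ginv κ u - llim (ginv κ) u) = 0 := by
          rw [sub_mul, one_mul, h8, sub_self]
        rcases mul_eq_zero.1 h10 with h9 | h9
        · have h11 : (y - llim g u) / (g u - llim g u) = 1 := by linarith
          have h12 := (div_eq_iff hne).1 h11
          rw [one_mul] at h12; linarith
        · exact absurd h9 hDne
      have hlintA : lint g κ w s = llim g w := by
        have h7 := lint_A (g := g) (κ := κ) (u := w)
        rw [← hsA] at h7; exact h7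
      rw [stilde_of_pos hP, ← hwdef, hlintA]
      have hge : g u ≤ llim g w := le_llim hg.1 hupos.le hwu
      have hspos : 0 < s := by rw [hsA]; exact A_pos hκ hwpos
      have hub' : ∀ t, 0 ≤ t → t < s → κ t ≤ u := fun t ht0 hts =>
        κ_le_of_lt_ginv hκ ht0 hupos.le (by rwa [← hsB])
      have hκsw : w ≤ κ s := by
        refine rc_ge hκ.2.1 hs0 fun r hr => le_κ_of_A_lt hκ hwpos ?_
        rw [← hsA]; exact hr
      have hkey := key_jump hκ h2 hspos hub' hupos.le (lt_of_lt_of_le hwu hκsw)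
      have h6 : llim g (κ s) ≤ g u := by
        rw [← hkey.1]; exact hg.1 hkey.2.1 hupos.le hkey.2.2
      have h5 : llim g w ≤ llim g (κ s) :=
        llim_le_of hwpos fun t ht0 htw => le_llim hg.1 ht0 (lt_of_lt_of_le htw hκsw)
      linarith
  · -- no jump at u
    have hnj : g u ≤ llim g u := not_lt.1 hjump
    have hgy : g u = y := le_antisymm (le_trans hnj hlly) hgu
    refine ⟨ginv κ u, ginv_nonneg hκ, ?_⟩
    set s := ginv κ u with hsdef
    have hs0 : 0 ≤ s := ginv_nonneg hκ
    have hspos : 0 < s := ginv_pos hκ hupos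
    have hκs : u ≤ κ s := le_κ_ginv hκ hupos.le
    have hub : ∀ t, 0 ≤ t → t < s → κ t ≤ u := fun t ht0 hts =>
      κ_le_of_lt_ginv hκ ht0 hupos.le hts
    by_cases hP : ∃ w, JumpAt g w ∧ s ∈ Set.Icc (llim (ginv κ) w) (ginv κ w)
    · obtain ⟨hjw, hmem⟩ := Classical.choose_spec hP
      set w := Classical.choose hP with hwdef
      have hjw' : llim g w < g w := hjw
      have hwpos : 0 < w := jump_pos hκ h1 hjw
      have hABw := A_lt_B hκ h1 hjw
      rcases eq_or_lt_of_le hmem.1 with hsA | hsA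
      · -- llim (ginv κ) w = s
        have hκsw : κ s ≤ w := κ_le_of_lt_ginv hκ hs0 hwpos.le (by rw [← hsA]; exact hABw)
        have hwκs : w ≤ κ s :=
          rc_ge hκ.2.1 hs0 fun r hr => le_κ_of_A_lt hκ hwpos (by rw [hsA]; exact hr)
        have hκsw' : κ s = w := le_antisymm hκsw hwκs
        have huw : u < w := by
          rcases eq_or_lt_of_le (le_trans hκs (le_of_eq hκsw')) with he | hlt
          · exact absurd (he ▸ hjw) hjump
          · exact hlt
        have hkey := key_jump hκ h2 hspos hub hupos.le (by rw [hκsw']; exact huw)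
        have e1 : llim g (κ s) ≤ y := by
          rw [← hkey.1, ← hgy]
          exact hg.1 hkey.2.1 hupos.le hkey.2.2
        have e2 : y ≤ llim g (κ s) := by
          rw [← hgy]
          exact le_llim hg.1 hupos.le (by rw [hκsw']; exact huw)
        have hlintA : lint g κ w s = llim g w := by
          have h7 := lint_A (g := g) (κ := κ) (u := w)
          rw [hsA] at h7; exact h7
        rw [stilde_of_pos hP, ← hwdef, hlintA, ← hκsw']
        exact le_antisymm e1 e2
      · rcases eq_or_lt_of_le hmem.2 with hsB | hsB
        · -- s = ginv κ w
          have hlintB : lint g κ w s = g w := by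
            have h7 := lint_B (g := g) (κ := κ) (u := w) hABw
            rw [← hsB] at h7; exact h7
          rw [stilde_of_pos hP, ← hwdef, hlintB]
          rcases lt_trichotomy w u with hwu | hwu | hwu
          · -- w < u
            have hub' : ∀ t, 0 ≤ t → t < s → κ t ≤ w := fun t ht0 hts =>
              κ_le_of_lt_ginv hκ ht0 hwpos.le (by rwa [← hsB])
            have hkey := key_jump hκ h2 hspos hub' hwpos.le (lt_of_lt_of_le hwu hκs)
            have hyl : y ≤ llim g (κ s) := by
              rcases eq_or_lt_of_le hκs with he | hlt
              · rw [← he]; linarith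
              · rw [← hgy]; exact le_llim hg.1 hupos.le hlt
            have h6 : llim g (κ s) ≤ g w := by
              rw [← hkey.1]; exact hg.1 hkey.2.1 hwpos.le hkey.2.2
            have h7 : g w ≤ llim g u := le_llim hg.1 hwpos.le hwu
            linarith
          · exact absurd (hwu ▸ hjw) hjump
          · -- u < w : contradiction
            exfalso
            have hc1 : s ≤ ginv κ ((u + w) / 2) := by
              rw [hsdef]; exact ginv_mono hκ (by linarith)
            have hc2 : ginv κ ((u + w) / 2) ≤ llim (ginv κ) w :=
              le_llim ((ginv_mono hκ).monotoneOn _) (by linarith) (by linarith)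
            linarith
        · -- interior : contradiction
          exfalso
          have hκsw : κ s ≤ w := κ_le_of_lt_ginv hκ hs0 hwpos.le hsB
          have huw : u < w := by
            rcases eq_or_lt_of_le (le_trans hκs hκsw) with he | hlt
            · exact absurd (he ▸ hjw) hjump
            · exact hlt
          have hc1 : s ≤ ginv κ ((u + w) / 2) := by
            rw [hsdef]; exact ginv_mono hκ (by linarith)
          have hc2 : ginv κ ((u + w) / 2) ≤ llim (ginv κ) w :=
            le_llim ((ginv_mono hκ).monotoneOn _) (by linarith) (by linarith)
          linarith
    · rw [stilde_of_neg hP]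
      rcases eq_or_lt_of_le hκs with he | hlt
      · rw [← he]; exact hgy
      · have hkey := key_jump hκ h2 hspos hub hupos.le hlt
        have hyl : y ≤ llim g (κ s) := by rw [← hgy]; exact le_llim hg.1 hupos.le hlt
        have hgl : llim g (κ s) ≤ y := by
          rw [← hkey.1, ← hgy]; exact hg.1 hkey.2.1 hupos.le hkey.2.2
        have hnjw : ¬ JumpAt g (κ s) := by
          intro hjw
          apply hP
          refine ⟨κ s, hjw, ?_, le_ginv hκ hs0 le_rfl⟩
          exact llim_le_of (lt_trans hupos hlt) fun v' hv0 hvκ => ginv_le hspos hvκ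
        have hj1 : g (κ s) ≤ llim g (κ s) := not_lt.1 hnjw
        have hj2 : llim g (κ s) ≤ g (κ s) := llim_le_self hg.1 (le_trans hupos.le hκs)
        linarith

end Aux3


/-- For a compatible pair, `g ∘̃ κ` is a continuous element of `D₀↑↑(ℝ₊)`. -/
theorem stmt8 (g κ : ℝ → ℝ) (hg : Dpp g) (hκ : Dpp κ)
    (h1 : H1 g κ) (h2 : H2 g κ) :
    ContinuousOn (stilde g κ) (Set.Ici 0) ∧ Dpp (stilde g κ) := by
  have hmono : MonotoneOn (stilde g κ) (Set.Ici 0) := stilde_mono hg hκ h1 h2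
  have h0 : stilde g κ 0 = 0 := stilde_zero hg hκ h1
  have hpos : ∀ t : ℝ, 0 < t → 0 < stilde g κ t := fun t ht => stilde_pos' hg hκ h1 ht
  have hunb : ∀ M : ℝ, ∃ t : ℝ, 0 ≤ t ∧ M < stilde g κ t := stilde_unbdd hg hκ h1 h2
  have himg : Set.Ici (0:ℝ) ⊆ stilde g κ '' Set.Ici 0 := by
    intro y hy
    obtain ⟨s, hs, he⟩ := stilde_surj hg hκ h1 h2 y hy
    exact ⟨s, hs, he⟩
  have hcont : ContinuousOn (stilde g κ) (Set.Ici 0) := by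
    intro a ha
    rcases eq_or_lt_of_le (Set.mem_Ici.1 ha) with he | hlt
    · rw [← he]
      refine continuousWithinAt_right_of_monotoneOn_of_image_mem_nhdsWithin hmono
        self_mem_nhdsWithin ?_
      rw [h0]
      exact mem_of_superset self_mem_nhdsWithin himg
    · refine ContinuousAt.continuousWithinAt ?_
      refine continuousAt_of_monotoneOn_of_image_mem_nhds hmono
        (mem_of_superset (isOpen_Ioi.mem_nhds hlt) Set.Ioi_subset_Ici_self) ?_
      refine mem_of_superset (isOpen_Ioi.mem_nhds (hpos a hlt)) ?_
      exact le_trans Set.Ioi_subset_Ici_self himg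
  refine ⟨hcont, hmono, ?_, h0, hpos, hunb⟩
  intro x hx
  exact (hcont x hx).mono (Set.Ici_subset_Ici.2 hx)
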